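/- Let U, V, W, X, Y, Z be six points on a nondegenerate conic in the real projective plane. Then the lines UX, VY, WZ are concurrent if and only if (U,X), (V,Y), (W,Z) are pairs of an involution on the conic. -/

import Mathlib

open Matrix

noncomputable section

/-- A (homogeneous coordinate vector for a) point of, or a line of, the real
projective plane. -/
abbrev Pt (K : Type*) := Fin 3 → K

variable {K : Type*} [Field K]

/-- Determinant of three coordinate vectors. -/
def det3 (a b c : Pt K) : K := (Matrix.of ![a, b, c]).det

/-- Three points of the projective plane are collinear. -/
def Collinear3 (a b c : Pt K) : Prop := det3 a b c = 0

/-- Incidence of a point and a line (both given in homogeneous coordinates). -/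
def Incid (p l : Pt K) : Prop := p ⬝ᵥ l = 0

/-- The line through two points (as a homogeneous coordinate vector). -/
def lineThrough (p q : Pt K) : Pt K := crossProduct p q

/-- Two coordinate vectors represent the same projective point. -/
def ProjEq (p q : Pt K) : Prop := ∃ t : K, t ≠ 0 ∧ q = t • p

/-- A point lies on the conic given by a symmetric matrix. -/
def OnConic (M : Matrix (Fin 3) (Fin 3) K) (p : Pt K) : Prop := p ⬝ᵥ M.mulVec p = 0

/-- The polar line of a point with respect to a conic. -/
def polarLine (M : Matrix (Fin 3) (Fin 3) K) (p : Pt K) : Pt K := M.mulVec p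

/-- The Steiner correspondence with respect to two conics: the intersection of the
two polars of a point. -/
def steiner (M₁ M₂ : Matrix (Fin 3) (Fin 3) K) (p : Pt K) : Pt K :=
  crossProduct (M₁.mulVec p) (M₂.mulVec p)

/-- Three lines are concurrent. -/
def ConcurrentLines (l₁ l₂ l₃ : Pt K) : Prop :=
  ∃ p : Pt K, p ≠ 0 ∧ Incid p l₁ ∧ Incid p l₂ ∧ Incid p l₃

/-- The cross ratio of four collinear points, computed by projecting from an
auxiliary point `O` not on their common line. -/
def crFrom (O p₁ p₂ p₃ p₄ : Pt K) : K :=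
  (det3 O p₁ p₃ * det3 O p₂ p₄) / (det3 O p₂ p₃ * det3 O p₁ p₄)

/-- `{D₁, D₂, D₃}` is a self-polar triangle of the conic `M`. -/
def SelfPolar (M : Matrix (Fin 3) (Fin 3) K) (D₁ D₂ D₃ : Pt K) : Prop :=
  ProjEq (lineThrough D₂ D₃) (polarLine M D₁) ∧
  ProjEq (lineThrough D₁ D₃) (polarLine M D₂) ∧
  ProjEq (lineThrough D₁ D₂) (polarLine M D₃)

/-- A nondegenerate conic: a symmetric matrix with nonzero determinant. -/
def NondegConic (M : Matrix (Fin 3) (Fin 3) K) : Prop := M.IsSymm ∧ M.det ≠ 0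

/-- `(p₁,q₁), (p₂,q₂), (p₃,q₃)` are pairs of an involution on the line `m`:
there is a projectivity of `m` onto itself of order two interchanging each pair. -/
def InvolutionPairsOnLine (m p₁ q₁ p₂ q₂ p₃ q₃ : Pt K) : Prop :=
  ∃ T : Matrix (Fin 3) (Fin 3) K, T.det ≠ 0 ∧
    (∀ p : Pt K, p ≠ 0 → Incid p m → Incid (T.mulVec p) m) ∧
    (∀ p : Pt K, p ≠ 0 → Incid p m → ProjEq p (T.mulVec (T.mulVec p))) ∧
    ProjEq q₁ (T.mulVec p₁) ∧ ProjEq q₂ (T.mulVec p₂) ∧ ProjEq q₃ (T.mulVec p₃)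

/-- `(p₁,q₁), (p₂,q₂), (p₃,q₃)` are pairs of an involution on the conic `M`:
there is a projectivity of the conic onto itself of order two interchanging
each pair. -/
def InvolutionPairsOnConic (M : Matrix (Fin 3) (Fin 3) K)
    (p₁ q₁ p₂ q₂ p₃ q₃ : Pt K) : Prop :=
  ∃ T : Matrix (Fin 3) (Fin 3) K, T.det ≠ 0 ∧
    (∀ p : Pt K, p ≠ 0 → OnConic M p → OnConic M (T.mulVec p)) ∧
    (∀ p : Pt K, p ≠ 0 → OnConic M p → ProjEq p (T.mulVec (T.mulVec p))) ∧
    ProjEq q₁ (T.mulVec p₁) ∧ ProjEq q₂ (T.mulVec p₂) ∧ ProjEq q₃ (T.mulVec p₃)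

lemma pe_symm {p q : Pt K} (h : ProjEq p q) : ProjEq q p := by
  obtain ⟨t, ht, rfl⟩ := h
  exact ⟨t⁻¹, inv_ne_zero ht, by rw [smul_smul, inv_mul_cancel₀ ht, one_smul]⟩

lemma smul_ne_zero_coeff {t : K} {p : Pt K} (h : t • p ≠ 0) : t ≠ 0 := by
  rintro rfl; simp at h

lemma cross_elim {x y : Pt K} (hx : x ≠ 0) (h : crossProduct x y = 0) : ∃ s : K, y = s • x := by
  rw [cross_apply] at h
  have h0 := congrFun h 0
  have h1 := congrFun h 1
  have h2 := congrFun h 2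
  simp at h0 h1 h2
  have hex : ∃ i, x i ≠ 0 := by
    by_contra hc; push_neg at hc
    exact hx (funext fun i => hc i)
  obtain ⟨i, hi⟩ := hex
  fin_cases i
  · have hi' : x 0 ≠ 0 := hi
    refine ⟨y 0 / x 0, ?_⟩
    have e0 : y 0 = y 0 / x 0 * x 0 := by field_simp
    have e1 : y 1 = y 0 / x 0 * x 1 := by field_simp; linear_combination h2
    have e2 : y 2 = y 0 / x 0 * x 2 := by field_simp; linear_combination -h1
    funext j; fin_cases j
    · exact e0
    · exact e1
    · exact e2
  · have hi' : x 1 ≠ 0 := hi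
    refine ⟨y 1 / x 1, ?_⟩
    have e0 : y 0 = y 1 / x 1 * x 0 := by field_simp; linear_combination -h2
    have e1 : y 1 = y 1 / x 1 * x 1 := by field_simp
    have e2 : y 2 = y 1 / x 1 * x 2 := by field_simp; linear_combination h0
    funext j; fin_cases j
    · exact e0
    · exact e1
    · exact e2
  · have hi' : x 2 ≠ 0 := hi
    refine ⟨y 2 / x 2, ?_⟩
    have e0 : y 0 = y 2 / x 2 * x 0 := by field_simp; linear_combination h1
    have e1 : y 1 = y 2 / x 2 * x 1 := by field_simp; linear_combination -h0
    have e2 : y 2 = y 2 / x 2 * x 2 := by field_simp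
    funext j; fin_cases j
    · exact e0
    · exact e1
    · exact e2

def Bl (M : Matrix (Fin 3) (Fin 3) K) (x y : Pt K) : K := x ⬝ᵥ M.mulVec y

lemma Bl_expand (M : Matrix (Fin 3) (Fin 3) K) (x y : Pt K) :
    Bl M x y = x 0 * (M 0 0 * y 0 + M 0 1 * y 1 + M 0 2 * y 2)
             + x 1 * (M 1 0 * y 0 + M 1 1 * y 1 + M 1 2 * y 2)
             + x 2 * (M 2 0 * y 0 + M 2 1 * y 1 + M 2 2 * y 2) := by
  simp [Bl, dotProduct, Matrix.mulVec, Fin.sum_univ_three]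

lemma onConic_iff (M : Matrix (Fin 3) (Fin 3) K) (p : Pt K) : OnConic M p ↔ Bl M p p = 0 :=
  Iff.rfl

lemma Bl_symm {M : Matrix (Fin 3) (Fin 3) K} (h : M.IsSymm) (x y : Pt K) :
    Bl M x y = Bl M y x := by
  have h01 : M 0 1 = M 1 0 := h.apply 1 0
  have h02 : M 0 2 = M 2 0 := h.apply 2 0
  have h12 : M 1 2 = M 2 1 := h.apply 2 1
  rw [Bl_expand, Bl_expand, h01, h02, h12]; ring

lemma mulVec_inj {A : Matrix (Fin 3) (Fin 3) K} (h : A.det ≠ 0) {x : Pt K}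
    (hx : A.mulVec x = 0) : x = 0 := by
  have := congrArg (fun v => A⁻¹.mulVec v) hx
  simpa [Matrix.mulVec_mulVec, Matrix.nonsing_inv_mul A (isUnit_iff_ne_zero.mpr h)] using this

lemma dot_cross_comb (p w : Pt K) (α β : K) :
    p ⬝ᵥ crossProduct w (α • w + β • p) = 0 := by
  simp [cross_apply, dotProduct, Fin.sum_univ_three, Pi.smul_apply, smul_eq_mul]; ring

lemma cross_of_perp {a b w : Pt K} :
    crossProduct w (crossProduct a b) = (w ⬝ᵥ b) • a - (w ⬝ᵥ a) • b := by
  funext i; fin_cases i <;>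
    simp [cross_apply, dotProduct, Fin.sum_univ_three, Pi.smul_apply, smul_eq_mul] <;> ring

lemma perp_perp {a b w : Pt K} (hab : crossProduct a b ≠ 0)
    (ha : w ⬝ᵥ a = 0) (hb : w ⬝ᵥ b = 0) : ∃ s : K, w = s • crossProduct a b := by
  apply cross_elim hab
  have : crossProduct w (crossProduct a b) = 0 := by
    rw [cross_of_perp, ha, hb]; simp
  rw [← cross_anticomm, this, neg_zero]

lemma det3_eq_dot (a b c : Pt K) : det3 a b c = a ⬝ᵥ crossProduct b c := by
  rw [triple_product_eq_det]; rfl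

lemma dot_cross_left (a b : Pt K) : a ⬝ᵥ crossProduct a b = 0 := dot_self_cross a b

lemma dot_cross_right (a b : Pt K) : b ⬝ᵥ crossProduct a b = 0 := dot_cross_self a b

lemma det3_perm1 (a b c : Pt K) : det3 a b c = det3 c a b := by
  rw [det3_eq_dot, det3_eq_dot, triple_product_permutation a, triple_product_permutation b]

lemma cross_nonzero {a b : Pt K} (ha : a ≠ 0) (hb : b ≠ 0) (hab : ¬ ProjEq a b) :
    crossProduct a b ≠ 0 := by
  intro h
  obtain ⟨s, rfl⟩ := cross_elim ha h
  exact hab ⟨s, smul_ne_zero_coeff hb, rfl⟩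

lemma isotropic_plane {M : Matrix (Fin 3) (Fin 3) K} (hM : NondegConic M)
    {a b : Pt K} (ha : a ≠ 0) (hb : b ≠ 0) (hab : ¬ ProjEq a b)
    (haa : Bl M a a = 0) (hbb : Bl M b b = 0) (habB : Bl M a b = 0) : False := by
  have hcr : crossProduct a b ≠ 0 := cross_nonzero ha hb hab
  have hMa : ∃ s : K, M.mulVec a = s • crossProduct a b := by
    refine perp_perp hcr ?_ ?_
    · rw [dotProduct_comm]; exact haa
    · rw [dotProduct_comm]; show Bl M b a = 0; rw [Bl_symm hM.1]; exact habB
  have hMb : ∃ s : K, M.mulVec b = s • crossProduct a b := by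
    refine perp_perp hcr ?_ ?_
    · rw [dotProduct_comm]; exact habB
    · rw [dotProduct_comm]; exact hbb
  obtain ⟨s, hs⟩ := hMa
  obtain ⟨u, hu⟩ := hMb
  have hs0 : s ≠ 0 := by
    rintro rfl; simp at hs
    exact ha (mulVec_inj hM.2 hs)
  have hu0 : u ≠ 0 := by
    rintro rfl; simp at hu
    exact hb (mulVec_inj hM.2 hu)
  have key : M.mulVec (u • a - s • b) = 0 := by
    rw [Matrix.mulVec_sub, Matrix.mulVec_smul, Matrix.mulVec_smul, hs, hu,
      smul_smul, smul_smul, mul_comm]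
    simp
  have h2 : u • a - s • b = 0 := mulVec_inj hM.2 key
  have : b = (u / s) • a := by
    have : u • a = s • b := by rwa [sub_eq_zero] at h2
    rw [div_eq_mul_inv, mul_comm, ← smul_smul, this, smul_smul, inv_mul_cancel₀ hs0, one_smul]
  exact hab ⟨u / s, div_ne_zero hu0 hs0, this⟩

lemma dep2 {a b : Pt K} (ha : a ≠ 0) (hb : b ≠ 0) (hab : ¬ ProjEq a b) {x y : K}
    (h : x • a + y • b = 0) : x = 0 ∧ y = 0 := by
  by_cases hy : y = 0
  · refine ⟨?_, hy⟩
    by_contra hx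
    apply ha
    have : x • a = 0 := by rw [← h, hy]; simp
    funext j
    have := congrFun this j
    simp [Pi.smul_apply, smul_eq_mul, hx] at this
    exact this
  · exfalso
    apply hab
    have hb' : b = (-x / y) • a := by
      have : y • b = -x • a := by
        rw [neg_smul, ← sub_eq_zero, sub_neg_eq_add, add_comm]; exact h
      calc b = y⁻¹ • (y • b) := by rw [smul_smul, inv_mul_cancel₀ hy, one_smul]
        _ = (-x / y) • a := by rw [this, smul_smul, div_eq_mul_inv, mul_comm]
    exact ⟨-x / y, smul_ne_zero_coeff (hb' ▸ hb), hb'⟩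

lemma Bl_comb (M : Matrix (Fin 3) (Fin 3) K) (x y : Pt K) (α β : K) :
    Bl M (α • x + β • y) (α • x + β • y)
      = α^2 * Bl M x x + α * β * (Bl M x y + Bl M y x) + β^2 * Bl M y y := by
  simp only [Bl_expand, Pi.add_apply, Pi.smul_apply, smul_eq_mul]; ring

lemma collinear_conic {M : Matrix (Fin 3) (Fin 3) ℝ} (hM : NondegConic M)
    {a b c : Pt ℝ} (ha : a ≠ 0) (hb : b ≠ 0) (hc : c ≠ 0)
    (hca : OnConic M a) (hcb : OnConic M b) (hcc : OnConic M c)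
    (hab : ¬ ProjEq a b) (hac : ¬ ProjEq a c) (hbc : ¬ ProjEq b c)
    (h : det3 a b c = 0) : False := by
  obtain ⟨v, hv, hvm⟩ : ∃ v : Pt ℝ, v ≠ 0 ∧ v ᵥ* (Matrix.of ![a, b, c]) = 0 :=
    Matrix.exists_vecMul_eq_zero_iff.mpr h
  have hcomp : ∀ j, v 0 * a j + v 1 * b j + v 2 * c j = 0 := by
    intro j
    have := congrFun hvm j
    simpa [Matrix.vecMul, dotProduct, Fin.sum_univ_three] using this
  by_cases hz : v 2 = 0
  · have hcomb : v 0 • a + v 1 • b = 0 := by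
      funext j
      have := hcomp j
      rw [hz] at this
      simpa [Pi.smul_apply, smul_eq_mul] using this
    obtain ⟨h0, h1⟩ := dep2 ha hb hab hcomb
    exact hv (funext fun i => by fin_cases i <;> assumption)
  · set α := -(v 0) / v 2 with hα
    set β := -(v 1) / v 2 with hβ
    have hceq : c = α • a + β • b := by
      funext j
      have := hcomp j
      simp only [hα, hβ, Pi.add_apply, Pi.smul_apply, smul_eq_mul]
      rw [div_mul_eq_mul_div, div_mul_eq_mul_div, ← add_div, eq_div_iff hz]
      linear_combination this
    have hα0 : α ≠ 0 := by
      intro h'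
      apply hbc
      rw [h', zero_smul, zero_add] at hceq
      exact ⟨β, smul_ne_zero_coeff (hceq ▸ hc), hceq⟩
    have hβ0 : β ≠ 0 := by
      intro h'
      apply hac
      rw [h', zero_smul, add_zero] at hceq
      exact ⟨α, smul_ne_zero_coeff (hceq ▸ hc), hceq⟩
    have hBab : Bl M a b = 0 := by
      have e : (0:ℝ) = α^2 * Bl M a a + α * β * (Bl M a b + Bl M b a) + β^2 * Bl M b b := by
        rw [← Bl_comb, ← hceq]; exact hcc.symm
      rw [(onConic_iff M a).mp hca, (onConic_iff M b).mp hcb, ← Bl_symm hM.1 a b] at e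
      have : α * β * (2 * Bl M a b) = 0 := by linarith
      have := mul_eq_zero.mp this
      rcases this with h' | h'
      · exact absurd h' (mul_ne_zero hα0 hβ0)
      · linarith [h']
    exact isotropic_plane hM ha hb hab ((onConic_iff M a).mp hca) ((onConic_iff M b).mp hcb) hBab

def homology (M : Matrix (Fin 3) (Fin 3) ℝ) (p : Pt ℝ) : Matrix (Fin 3) (Fin 3) ℝ :=
  Matrix.of fun i j => Bl M p p * (if i = j then 1 else 0) - 2 * p i * M.mulVec p j

lemma homology_mulVec (M : Matrix (Fin 3) (Fin 3) ℝ) (p x : Pt ℝ) :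
    (homology M p).mulVec x = Bl M p p • x - (2 * Bl M x p) • p := by
  funext i
  fin_cases i <;>
    simp [homology, Bl, Matrix.mulVec, dotProduct, Fin.sum_univ_three, Pi.smul_apply,
      Pi.sub_apply, smul_eq_mul, Fin.isValue] <;> ring

lemma det_aux (c : ℝ) (p q : Pt ℝ) :
    (Matrix.of fun i j => c * (if i = j then (1:ℝ) else 0) - 2 * p i * q j).det
      = c^2 * (c - 2 * (p 0 * q 0 + p 1 * q 1 + p 2 * q 2)) := by
  rw [Matrix.det_fin_three]
  norm_num [Matrix.of_apply, Fin.ext_iff]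
  ring

lemma homology_det (M : Matrix (Fin 3) (Fin 3) ℝ) (p : Pt ℝ) :
    (homology M p).det = - (Bl M p p)^3 := by
  have := det_aux (Bl M p p) p (M.mulVec p)
  rw [homology]
  rw [this]
  have hq : p 0 * M.mulVec p 0 + p 1 * M.mulVec p 1 + p 2 * M.mulVec p 2 = Bl M p p := by
    simp [Bl, dotProduct, Fin.sum_univ_three]
  rw [hq]; ring

lemma homology_sq (M : Matrix (Fin 3) (Fin 3) ℝ) (p x : Pt ℝ) :
    (homology M p).mulVec ((homology M p).mulVec x) = ((Bl M p p)^2) • x := by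
  rw [homology_mulVec, homology_mulVec]
  have hBl : Bl M (Bl M p p • x - (2 * Bl M x p) • p) p
      = Bl M p p * Bl M x p - 2 * Bl M x p * Bl M p p := by
    simp only [Bl_expand, Pi.sub_apply, Pi.smul_apply, smul_eq_mul]; ring
  rw [hBl]
  funext j
  simp only [Pi.sub_apply, Pi.smul_apply, smul_eq_mul]
  ring

lemma homology_onConic {M : Matrix (Fin 3) (Fin 3) ℝ} (hs : M.IsSymm) (p : Pt ℝ)
    {x : Pt ℝ} (hx : OnConic M x) : OnConic M ((homology M p).mulVec x) := by
  rw [onConic_iff] at hx ⊢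
  rw [homology_mulVec]
  have e : Bl M (Bl M p p • x - (2 * Bl M x p) • p) (Bl M p p • x - (2 * Bl M x p) • p)
      = (Bl M p p)^2 * Bl M x x - Bl M p p * (2 * Bl M x p) * (Bl M x p + Bl M p x)
        + (2 * Bl M x p)^2 * Bl M p p := by
    simp only [Bl_expand, Pi.sub_apply, Pi.smul_apply, smul_eq_mul]; ring
  rw [e, hx, Bl_symm hs p x]
  ring

lemma tangent_dot_ne {M : Matrix (Fin 3) (Fin 3) ℝ} (hM : NondegConic M)
    {U X : Pt ℝ} (hU : U ≠ 0) (hX : X ≠ 0) (hUc : OnConic M U) (hXc : OnConic M X)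
    (hUX : ¬ ProjEq U X) : Bl M X U ≠ 0 := by
  intro h
  exact isotropic_plane hM hU hX hUX ((onConic_iff M U).mp hUc) ((onConic_iff M X).mp hXc)
    (by rw [Bl_symm hM.1]; exact h)

lemma projEq_of_smul_eq_smul {x y : Pt ℝ} {s t : ℝ} (ht : t ≠ 0) (hy : y ≠ 0)
    (h : t • y = s • x) : ProjEq x y := by
  have hy' : y = (s / t) • x := by
    rw [div_eq_mul_inv, mul_comm, ← smul_smul, ← h, smul_smul, inv_mul_cancel₀ ht, one_smul]
  exact ⟨s / t, smul_ne_zero_coeff (hy' ▸ hy), hy'⟩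

lemma homology_swap {M : Matrix (Fin 3) (Fin 3) ℝ} (hM : NondegConic M)
    {U X p : Pt ℝ} (hU : U ≠ 0) (hX : X ≠ 0) (hp : p ≠ 0)
    (hUc : OnConic M U) (hXc : OnConic M X) (hUX : ¬ ProjEq U X)
    (hpU : ¬ ProjEq U p) (hpX : ¬ ProjEq X p)
    (hpc : Bl M p p ≠ 0)
    (hinc : p ⬝ᵥ crossProduct U X = 0) :
    ProjEq X ((homology M p).mulVec U) := by
  have hcrUX : crossProduct U X ≠ 0 := cross_nonzero hU hX hUX
  have hBXU : Bl M X U ≠ 0 := tangent_dot_ne hM hU hX hUc hXc hUX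
  have hMU : M.mulVec U ≠ 0 := fun h => hU (mulVec_inj hM.2 h)
  have hBpU : Bl M p U ≠ 0 := by
    intro hB
    set r := crossProduct (M.mulVec U) (crossProduct U X) with hrdef
    have hr : r ≠ 0 := by
      rw [hrdef]
      intro h
      obtain ⟨s, hs⟩ := cross_elim hMU h
      have h2 := congrArg (fun w => X ⬝ᵥ w) hs
      simp only [dotProduct_smul, smul_eq_mul] at h2
      rw [dot_cross_right] at h2
      have hXMU : X ⬝ᵥ M.mulVec U = Bl M X U := rfl
      rw [hXMU] at h2
      rcases mul_eq_zero.mp h2.symm with h' | h'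
      · rw [h', zero_smul] at hs; exact hcrUX hs
      · exact hBXU h'
    obtain ⟨s₁, hs₁⟩ := perp_perp hr (show p ⬝ᵥ M.mulVec U = 0 from hB) hinc
    obtain ⟨s₂, hs₂⟩ := perp_perp hr (show U ⬝ᵥ M.mulVec U = 0 from hUc) (dot_cross_left U X)
    have hs₂0 : s₂ ≠ 0 := by rintro rfl; rw [zero_smul] at hs₂; exact hU hs₂
    refine hpU (projEq_of_smul_eq_smul (s := s₁) hs₂0 hp ?_)
    rw [hs₁, smul_smul, mul_comm, ← smul_smul, ← hs₂]
  set u' := (homology M p).mulVec U with hu'def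
  have hu'eq : u' = Bl M p p • U - (2 * Bl M U p) • p := homology_mulVec M p U
  have hBUp : Bl M U p ≠ 0 := by rw [Bl_symm hM.1]; exact hBpU
  have h2B : (2 : ℝ) * Bl M U p ≠ 0 := mul_ne_zero two_ne_zero hBUp
  have hu'0 : u' ≠ 0 := by
    intro h
    rw [hu'eq, sub_eq_zero] at h
    exact hpU (projEq_of_smul_eq_smul h2B hp h.symm)
  have hu'c : OnConic M u' := homology_onConic hM.1 p hUc
  have hu'inc : u' ⬝ᵥ crossProduct U X = 0 := by
    rw [hu'eq, sub_dotProduct, smul_dotProduct, smul_dotProduct, dot_cross_left, hinc]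
    simp
  have hu'U : ¬ ProjEq U u' := by
    rintro ⟨t, ht, htu⟩
    apply hpU
    have h3 : (2 * Bl M U p) • p = (Bl M p p - t) • U := by
      rw [sub_smul, ← htu, hu'eq]; abel
    exact projEq_of_smul_eq_smul h2B hp h3
  by_contra hcon
  exact collinear_conic hM hU hX hu'0 hUc hXc hu'c hUX hu'U hcon
    (by rw [det3_perm1, det3_eq_dot]; exact hu'inc)

lemma indep3 {u v x : Pt ℝ} (h : det3 u v x ≠ 0) {r s t : ℝ}
    (hcomb : r • u + s • v + t • x = 0) : r = 0 ∧ s = 0 ∧ t = 0 := by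
  set e : Pt ℝ := ![r, s, t] with he
  have heq : e ᵥ* (Matrix.of ![u, v, x]) = 0 := by
    funext j
    have := congrFun hcomb j
    simp only [Pi.add_apply, Pi.smul_apply, smul_eq_mul, Pi.zero_apply] at this
    simp [Matrix.vecMul, dotProduct, Fin.sum_univ_three, he]
    linarith
  have he0 : e = 0 := by
    by_contra h'
    exact h (Matrix.exists_vecMul_eq_zero_iff.mp ⟨e, h', heq⟩)
  refine ⟨congrFun he0 0, congrFun he0 1, congrFun he0 2⟩

lemma exists_comb {u v x : Pt ℝ} (h : det3 u v x ≠ 0) (y : Pt ℝ) :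
    ∃ a b c : ℝ, y = a • u + b • v + c • x := by
  set A := (Matrix.of ![u, v, x])ᵀ with hA
  have hdA : A.det ≠ 0 := by rwa [hA, Matrix.det_transpose]
  set w := A⁻¹.mulVec y with hw
  have hAw : A.mulVec w = y := by
    rw [hw, Matrix.mulVec_mulVec, Matrix.mul_nonsing_inv A (isUnit_iff_ne_zero.mpr hdA),
      Matrix.one_mulVec]
  refine ⟨w 0, w 1, w 2, ?_⟩
  funext j
  have := congrFun hAw j
  simp only [Matrix.mulVec, dotProduct, Fin.sum_univ_three, Matrix.transpose_apply, hA] at this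
  rw [← this]
  simp [Pi.add_apply, Pi.smul_apply, smul_eq_mul]
  ring

lemma det3_image (A : Matrix (Fin 3) (Fin 3) ℝ) (u v x : Pt ℝ) :
    det3 (A.mulVec u) (A.mulVec v) (A.mulVec x) = det3 u v x * A.det := by
  have : Matrix.of ![A.mulVec u, A.mulVec v, A.mulVec x] = Matrix.of ![u, v, x] * Aᵀ := by
    ext i j
    fin_cases i <;>
      simp [Matrix.mul_apply, Matrix.mulVec, dotProduct, Fin.sum_univ_three,
        Matrix.transpose_apply] <;> ring
  rw [det3, this, Matrix.det_mul, Matrix.det_transpose]; rfl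

lemma det3_comb (b c : ℝ) (v x : Pt ℝ) : det3 (b • v + c • x) v x = 0 := by
  rw [det3, Matrix.det_fin_three]
  simp [Pi.add_apply, Pi.smul_apply, smul_eq_mul]
  ring

lemma solve_smul {t : ℝ} (ht : t ≠ 0) {y R : Pt ℝ} (h : t • y = R) : y = t⁻¹ • R := by
  rw [← h, smul_smul, inv_mul_cancel₀ ht, one_smul]

lemma eq_scal {A B X : Pt ℝ} {s t : ℝ} (ht : t ≠ 0) (hA : A = s • X) (hB : B = t • X) :
    A = (s / t) • B := by
  rw [hA, hB, smul_smul, div_mul_cancel₀ _ ht]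

lemma mulVec_comb (A : Matrix (Fin 3) (Fin 3) ℝ) (a b c : ℝ) (u v x : Pt ℝ) :
    A.mulVec (a • u + b • v + c • x)
      = a • (A.mulVec u) + b • (A.mulVec v) + c • (A.mulVec x) := by
  rw [Matrix.mulVec_add, Matrix.mulVec_add, Matrix.mulVec_smul, Matrix.mulVec_smul,
    Matrix.mulVec_smul]

lemma point_not_on_secant {M : Matrix (Fin 3) (Fin 3) ℝ} (hM : NondegConic M)
    {a b q : Pt ℝ} (ha : a ≠ 0) (hb : b ≠ 0) (hq : q ≠ 0)
    (hca : OnConic M a) (hcb : OnConic M b) (hcq : OnConic M q)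
    (hab : ¬ ProjEq a b) (hqa : ¬ ProjEq q a) (hqb : ¬ ProjEq q b) :
    q ⬝ᵥ crossProduct a b ≠ 0 := by
  intro h
  exact collinear_conic hM hq ha hb hcq hca hcb hqa hqb hab (by rw [det3_eq_dot]; exact h)

lemma not_projEq_of_inc {q p l : Pt ℝ} (hq : q ⬝ᵥ l ≠ 0) (hp : p ⬝ᵥ l = 0) :
    ¬ ProjEq q p := by
  rintro ⟨t, ht, rfl⟩
  rw [smul_dotProduct, smul_eq_mul] at hp
  rcases mul_eq_zero.mp hp with h | h
  · exact ht h
  · exact hq h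

/-- Let `U, V, W, X, Y, Z` be six (distinct) points on a nondegenerate conic in
the real projective plane.  Then the lines `UX`, `VY`, `WZ` are concurrent if and
only if `(U,X)`, `(V,Y)`, `(W,Z)` are pairs of an involution on the conic. -/
theorem stmt3 (M : Matrix (Fin 3) (Fin 3) ℝ) (hM : NondegConic M)
    (U V W X Y Z : Pt ℝ)
    (hU : U ≠ 0) (hV : V ≠ 0) (hW : W ≠ 0) (hX : X ≠ 0) (hY : Y ≠ 0) (hZ : Z ≠ 0)
    (hUc : OnConic M U) (hVc : OnConic M V) (hWc : OnConic M W)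
    (hXc : OnConic M X) (hYc : OnConic M Y) (hZc : OnConic M Z)
    -- the six points are pairwise distinct
    (hUV : ¬ ProjEq U V) (hUW : ¬ ProjEq U W) (hUX : ¬ ProjEq U X)
    (hUY : ¬ ProjEq U Y) (hUZ : ¬ ProjEq U Z) (hVW : ¬ ProjEq V W)
    (hVX : ¬ ProjEq V X) (hVY : ¬ ProjEq V Y) (hVZ : ¬ ProjEq V Z)
    (hWX : ¬ ProjEq W X) (hWY : ¬ ProjEq W Y) (hWZ : ¬ ProjEq W Z)
    (hXY : ¬ ProjEq X Y) (hXZ : ¬ ProjEq X Z) (hYZ : ¬ ProjEq Y Z) :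
    ConcurrentLines (lineThrough U X) (lineThrough V Y) (lineThrough W Z) ↔
      InvolutionPairsOnConic M U X V Y W Z := by
  have hUl2 : U ⬝ᵥ crossProduct V Y ≠ 0 :=
    point_not_on_secant hM hV hY hU hVc hYc hUc hVY hUV hUY
  have hXl2 : X ⬝ᵥ crossProduct V Y ≠ 0 :=
    point_not_on_secant hM hV hY hX hVc hYc hXc hVY (fun h => hVX (pe_symm h)) hXY
  have hVl1 : V ⬝ᵥ crossProduct U X ≠ 0 :=
    point_not_on_secant hM hU hX hV hUc hXc hVc hUX (fun h => hUV (pe_symm h)) hVX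
  have hYl1 : Y ⬝ᵥ crossProduct U X ≠ 0 :=
    point_not_on_secant hM hU hX hY hUc hXc hYc hUX (fun h => hUY (pe_symm h))
      (fun h => hXY (pe_symm h))
  have hWl1 : W ⬝ᵥ crossProduct U X ≠ 0 :=
    point_not_on_secant hM hU hX hW hUc hXc hWc hUX (fun h => hUW (pe_symm h))
      (fun h => hWX h)
  have hZl1 : Z ⬝ᵥ crossProduct U X ≠ 0 :=
    point_not_on_secant hM hU hX hZ hUc hXc hZc hUX (fun h => hUZ (pe_symm h))
      (fun h => hXZ (pe_symm h))
  constructor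
  · rintro ⟨p, hp0, h1, h2, h3⟩
    have h1' : p ⬝ᵥ crossProduct U X = 0 := h1
    have h2' : p ⬝ᵥ crossProduct V Y = 0 := h2
    have h3' : p ⬝ᵥ crossProduct W Z = 0 := h3
    have hpU : ¬ ProjEq U p := not_projEq_of_inc hUl2 h2'
    have hpX : ¬ ProjEq X p := not_projEq_of_inc hXl2 h2'
    have hpV : ¬ ProjEq V p := not_projEq_of_inc hVl1 h1'
    have hpY : ¬ ProjEq Y p := not_projEq_of_inc hYl1 h1'
    have hpW : ¬ ProjEq W p := not_projEq_of_inc hWl1 h1'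
    have hpZ : ¬ ProjEq Z p := not_projEq_of_inc hZl1 h1'
    have hpc : Bl M p p ≠ 0 := by
      intro hc
      exact collinear_conic hM hp0 hU hX ((onConic_iff M p).mpr hc) hUc hXc
        (fun h => hpU (pe_symm h)) (fun h => hpX (pe_symm h)) hUX
        (by rw [det3_eq_dot]; exact h1')
    refine ⟨homology M p, ?_, ?_, ?_, ?_, ?_, ?_⟩
    · rw [homology_det]; exact neg_ne_zero.mpr (pow_ne_zero 3 hpc)
    · intro x hx0 hxc; exact homology_onConic hM.1 p hxc
    · intro x hx0 hxc
      exact ⟨(Bl M p p)^2, pow_ne_zero 2 hpc, homology_sq M p x⟩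
    · exact homology_swap hM hU hX hp0 hUc hXc hUX hpU hpX hpc h1'
    · exact homology_swap hM hV hY hp0 hVc hYc hVY hpV hpY hpc h2'
    · exact homology_swap hM hW hZ hp0 hWc hZc hWZ hpW hpZ hpc h3'
  · rintro ⟨T, hTdet, hTcon, hTinv, hTU, hTV, hTW0⟩
    obtain ⟨s₁, hs₁0, hs₁⟩ := hTU
    obtain ⟨s₂, hs₂0, hs₂⟩ := hTV
    obtain ⟨s₃, hs₃0, hs₃⟩ := hTW0
    have hl₁ : crossProduct U X ≠ 0 := cross_nonzero hU hX hUX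
    have hl₂ : crossProduct V Y ≠ 0 := cross_nonzero hV hY hVY
    set p := crossProduct (crossProduct U X) (crossProduct V Y) with hpdef
    have hp0 : p ≠ 0 := by
      intro h
      obtain ⟨s, hs⟩ := cross_elim hl₁ h
      have hV0 : V ⬝ᵥ crossProduct V Y = 0 := dot_cross_left V Y
      rw [hs, dotProduct_smul, smul_eq_mul] at hV0
      rcases mul_eq_zero.mp hV0 with h' | h'
      · rw [h', zero_smul] at hs; exact hl₂ hs
      · exact hVl1 h'
    have hpl₁ : p ⬝ᵥ crossProduct U X = 0 := by
      rw [hpdef, dotProduct_comm]; exact dot_cross_left _ _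
    have hpl₂ : p ⬝ᵥ crossProduct V Y = 0 := by
      rw [hpdef, dotProduct_comm]; exact dot_cross_right _ _
    have hpU : ¬ ProjEq U p := not_projEq_of_inc hUl2 hpl₂
    have hpX : ¬ ProjEq X p := not_projEq_of_inc hXl2 hpl₂
    have hpV : ¬ ProjEq V p := not_projEq_of_inc hVl1 hpl₁
    have hpY : ¬ ProjEq Y p := not_projEq_of_inc hYl1 hpl₁
    have hpc : Bl M p p ≠ 0 := by
      intro hc
      exact collinear_conic hM hp0 hU hX ((onConic_iff M p).mpr hc) hUc hXc
        (fun h => hpU (pe_symm h)) (fun h => hpX (pe_symm h)) hUX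
        (by rw [det3_eq_dot]; exact hpl₁)
    obtain ⟨t₁, ht₁0, ht₁⟩ := homology_swap hM hU hX hp0 hUc hXc hUX hpU hpX hpc hpl₁
    obtain ⟨t₂, ht₂0, ht₂⟩ := homology_swap hM hV hY hp0 hVc hYc hVY hpV hpY hpc hpl₂
    -- images of X and Y under S and T
    have hSX : (homology M p).mulVec X = (t₁⁻¹ * (Bl M p p)^2) • U := by
      have h := homology_sq M p U
      rw [ht₁, Matrix.mulVec_smul] at h
      rw [solve_smul ht₁0 h, smul_smul]
    have hSY : (homology M p).mulVec Y = (t₂⁻¹ * (Bl M p p)^2) • V := by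
      have h := homology_sq M p V
      rw [ht₂, Matrix.mulVec_smul] at h
      rw [solve_smul ht₂0 h, smul_smul]
    obtain ⟨r₁, hr₁0, hr₁⟩ := hTinv U hU hUc
    obtain ⟨r₂, hr₂0, hr₂⟩ := hTinv V hV hVc
    have hTX : T.mulVec X = (s₁⁻¹ * r₁) • U := by
      rw [hs₁, Matrix.mulVec_smul] at hr₁
      rw [solve_smul hs₁0 hr₁, smul_smul]
    have hTY : T.mulVec Y = (s₂⁻¹ * r₂) • V := by
      rw [hs₂, Matrix.mulVec_smul] at hr₂
      rw [solve_smul hs₂0 hr₂, smul_smul]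
    -- scalar relations between T and S at the four points
    have hc2 : (Bl M p p)^2 ≠ 0 := pow_ne_zero 2 hpc
    have hL1 : T.mulVec U = (s₁ / t₁) • (homology M p).mulVec U := eq_scal ht₁0 hs₁ ht₁
    have hL2 : T.mulVec V = (s₂ / t₂) • (homology M p).mulVec V := eq_scal ht₂0 hs₂ ht₂
    have hL3 : T.mulVec X
        = ((s₁⁻¹ * r₁) / (t₁⁻¹ * (Bl M p p)^2)) • (homology M p).mulVec X :=
      eq_scal (mul_ne_zero (inv_ne_zero ht₁0) hc2) hTX hSX
    have hmu : T.mulVec Y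
        = ((s₂⁻¹ * r₂) / (t₂⁻¹ * (Bl M p p)^2)) • (homology M p).mulVec Y :=
      eq_scal (mul_ne_zero (inv_ne_zero ht₂0) hc2) hTY hSY
    set mu := (s₂⁻¹ * r₂) / (t₂⁻¹ * (Bl M p p)^2) with hmudef
    have hmu0 : mu ≠ 0 :=
      div_ne_zero (mul_ne_zero (inv_ne_zero hs₂0) hr₂0)
        (mul_ne_zero (inv_ne_zero ht₂0) hc2)
    -- basis
    have hdUVX : det3 U V X ≠ 0 := fun h =>
      collinear_conic hM hU hV hX hUc hVc hXc hUV hUX hVX h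
    obtain ⟨a, b, cc, hYe⟩ := exists_comb hdUVX Y
    have ha0 : a ≠ 0 := by
      intro h
      rw [h, zero_smul, zero_add] at hYe
      refine collinear_conic hM hY hV hX hYc hVc hXc
        (fun h' => hVY (pe_symm h')) (fun h' => hXY (pe_symm h')) hVX ?_
      rw [hYe]; exact det3_comb _ _ _ _
    have hb0 : b ≠ 0 := by
      intro h
      rw [h, zero_smul, add_zero] at hYe
      refine collinear_conic hM hY hU hX hYc hUc hXc
        (fun h' => hUY (pe_symm h')) (fun h' => hXY (pe_symm h')) hUX ?_
      rw [hYe]; exact det3_comb _ _ _ _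
    have hcc0 : cc ≠ 0 := by
      intro h
      rw [h, zero_smul, add_zero] at hYe
      refine collinear_conic hM hY hU hV hYc hUc hVc
        (fun h' => hUY (pe_symm h')) (fun h' => hVY (pe_symm h')) hUV ?_
      rw [hYe]; exact det3_comb _ _ _ _
    obtain ⟨al, be, ga, hWe⟩ := exists_comb hdUVX W
    -- independence of images
    have hdS : det3 ((homology M p).mulVec U) ((homology M p).mulVec V)
        ((homology M p).mulVec X) ≠ 0 := by
      rw [det3_image]
      exact mul_ne_zero hdUVX
        (by rw [homology_det]; exact neg_ne_zero.mpr (pow_ne_zero 3 hpc))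
    have eqT : T.mulVec Y
        = a • (T.mulVec U) + b • (T.mulVec V) + cc • (T.mulVec X) := by
      rw [hYe, mulVec_comb]
    have eqS : (homology M p).mulVec Y
        = a • ((homology M p).mulVec U) + b • ((homology M p).mulVec V)
          + cc • ((homology M p).mulVec X) := by
      rw [hYe, mulVec_comb]
    have hcombo : (a * ((s₁/t₁) - mu)) • (homology M p).mulVec U
        + (b * ((s₂/t₂) - mu)) • (homology M p).mulVec V
        + (cc * (((s₁⁻¹ * r₁) / (t₁⁻¹ * (Bl M p p)^2)) - mu)) • (homology M p).mulVec X
        = 0 := by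
      funext j
      have e1 := congrFun eqT j
      have e2 := congrFun eqS j
      have e3 := congrFun hmu j
      have e4 := congrFun hL1 j
      have e5 := congrFun hL2 j
      have e6 := congrFun hL3 j
      simp only [Pi.add_apply, Pi.smul_apply, smul_eq_mul, Pi.zero_apply] at e1 e2 e3 e4 e5 e6 ⊢
      linear_combination -e1 + e3 - a*e4 - b*e5 - cc*e6 + mu*e2
    obtain ⟨hA, hB, hC⟩ := indep3 hdS hcombo
    have hL1mu : s₁/t₁ = mu := by
      rcases mul_eq_zero.mp hA with h | h
      · exact absurd h ha0
      · linarith [h]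
    have hL2mu : s₂/t₂ = mu := by
      rcases mul_eq_zero.mp hB with h | h
      · exact absurd h hb0
      · linarith [h]
    have hL3mu : (s₁⁻¹ * r₁) / (t₁⁻¹ * (Bl M p p)^2) = mu := by
      rcases mul_eq_zero.mp hC with h | h
      · exact absurd h hcc0
      · linarith [h]
    -- T W = mu • S W
    have eqTW : T.mulVec W = mu • (homology M p).mulVec W := by
      rw [hWe, mulVec_comb, mulVec_comb, hL1, hL2, hL3, hL1mu, hL2mu, hL3mu]
      funext j
      simp only [Pi.add_apply, Pi.smul_apply, smul_eq_mul]
      ring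
    -- conclude Z lies in span {W, p}
    have hmuSW : mu • (homology M p).mulVec W = s₃ • Z := by rw [← eqTW, ← hs₃]
    have hSWeq : (homology M p).mulVec W
        = Bl M p p • W - (2 * Bl M W p) • p := homology_mulVec M p W
    have hZe : Z = (s₃⁻¹ * (mu * Bl M p p)) • W + (s₃⁻¹ * (-(mu * (2 * Bl M W p)))) • p := by
      have h : s₃ • Z = (mu * Bl M p p) • W + (-(mu * (2 * Bl M W p))) • p := by
        rw [← hmuSW, hSWeq]
        funext j
        simp only [Pi.add_apply, Pi.sub_apply, Pi.smul_apply, smul_eq_mul]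
        ring
      rw [solve_smul hs₃0 h]
      funext j
      simp only [Pi.add_apply, Pi.smul_apply, smul_eq_mul]
      ring
    refine ⟨p, hp0, hpl₁, hpl₂, ?_⟩
    show p ⬝ᵥ crossProduct W Z = 0
    rw [hZe]
    exact dot_cross_comb _ _ _ _
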